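/- arXiv:0809.3924 — 3 statements merged into one kernel-verified Lean document; each statement's English description precedes it below -/
import Mathlib

section
/- The Fourier transform of the Fejér kernel satisfies ∫_ℝ T·(sin(πTv)/(πTv))²·e^{2πiQv} dv = max(1 - |Q|/T, 0) for all real Q and T > 0. -/
open Real MeasureTheory

/-- The Fejér kernel `F_T(v) = T (sin(πTv)/(πTv))²`, with value `T` at `v = 0`. -/
noncomputable def fejer (T v : ℝ) : ℝ :=
  if v = 0 then T else T * (Real.sin (π * T * v) / (π * T * v)) ^ 2

lemma fejer_nonneg {T : ℝ} (hT : 0 < T) (v : ℝ) : 0 ≤ fejer T v := by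
  unfold fejer; split
  · exact hT.le
  · positivity

lemma sin_sq_le_sq (x : ℝ) : Real.sin x ^ 2 ≤ x ^ 2 := by
  have h := abs_sin_le_abs (x := x)
  calc Real.sin x ^ 2 = |Real.sin x| ^ 2 := (sq_abs _).symm
    _ ≤ |x| ^ 2 := by gcongr
    _ = x ^ 2 := sq_abs _

lemma fejer_bound {T : ℝ} (hT : 0 < T) (v : ℝ) :
    fejer T v * (1 + v ^ 2) ≤ T + 1 / (π ^ 2 * T) := by
  unfold fejer
  have hπ := Real.pi_pos
  split_ifs with h
  · subst h
    have : 0 ≤ 1 / (π ^ 2 * T) := by positivity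
    nlinarith
  · have h1 : T * (Real.sin (π * T * v) / (π * T * v)) ^ 2 ≤ T := by
      have hx : (0:ℝ) < (π * T * v) ^ 2 := by positivity
      have : (Real.sin (π * T * v) / (π * T * v)) ^ 2 ≤ 1 := by
        rw [div_pow, div_le_one hx]
        exact sin_sq_le_sq _
      nlinarith
    have h2 : T * (Real.sin (π * T * v) / (π * T * v)) ^ 2 * v ^ 2 ≤ 1 / (π ^ 2 * T) := by
      have hs : Real.sin (π * T * v) ^ 2 ≤ 1 := by
        nlinarith [Real.sin_sq_add_cos_sq (π * T * v), sq_nonneg (Real.cos (π * T * v))]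
      have hx : (0:ℝ) < (π * T * v) ^ 2 := by positivity
      rw [div_pow, mul_comm T, mul_assoc, div_mul_eq_mul_div, div_le_div_iff₀ hx (by positivity)]
      have he : (π * T * v) ^ 2 = π ^ 2 * T ^ 2 * v ^ 2 := by ring
      nlinarith
    nlinarith

lemma fejer_integrable {T : ℝ} (hT : 0 < T) : Integrable (fejer T) := by
  have hmeas : Measurable (fejer T) := by
    unfold fejer
    exact Measurable.ite (measurableSet_eq) measurable_const (by fun_prop)
  have hC : (0:ℝ) ≤ T + 1 / (π ^ 2 * T) := by positivity
  apply ((integrable_inv_one_add_sq.const_mul (T + 1 / (π ^ 2 * T))).mono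
    hmeas.aestronglyMeasurable)
  filter_upwards with v
  rw [Real.norm_eq_abs, Real.norm_eq_abs, abs_of_nonneg (fejer_nonneg hT v)]
  have h1 : (0:ℝ) < 1 + v ^ 2 := by positivity
  rw [abs_of_nonneg (by positivity)]
  rw [← div_eq_mul_inv, le_div_iff₀ h1]
  exact fejer_bound hT v


lemma cexp_deriv (c : ℂ) (x : ℝ) :
    HasDerivAt (fun x : ℝ => Complex.exp (c * x)) (c * Complex.exp (c*x)) x := by
  have h := ((Complex.ofRealCLM.hasDerivAt (x := x)).const_mul c).cexp
  simpa [mul_comm] using h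

lemma aux_deriv (T : ℝ) (hT : T ≠ 0) (c : ℂ) (hc : c ≠ 0) (a : ℝ) (x : ℝ) :
    HasDerivAt (fun ξ : ℝ => (1 + (a:ℂ) * ξ / T) * Complex.exp (c * ξ) / c
        - a * Complex.exp (c * ξ) / (T * c ^ 2))
      (((1 + a * x / T : ℝ) : ℂ) * Complex.exp (c * x)) x := by
  have h2 : HasDerivAt (fun ξ : ℝ => (1 + (a:ℂ) * ξ / T)) ((a:ℂ)/T) x := by
    simpa using (((Complex.ofRealCLM.hasDerivAt (x := x)).const_mul
      (a:ℂ)).div_const (T:ℂ)).const_add 1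
  have h3 := ((h2.mul (cexp_deriv c x)).div_const c).sub
    (((cexp_deriv c x).const_mul (a:ℂ)).div_const ((T:ℂ) * c ^ 2))
  convert h3 using 1
  · rfl
  · rfl
  have hT' : (T:ℂ) ≠ 0 := by exact_mod_cast hT
  push_cast
  field_simp
  ring

lemma int_piece (T : ℝ) (hT : 0 < T) (c : ℂ) (hc : c ≠ 0) (a : ℝ) (l r : ℝ) :
    (∫ ξ in l..r, ((1 + a * ξ / T : ℝ) : ℂ) * Complex.exp (c * ξ))
      = ((1 + (a:ℂ) * r / T) * Complex.exp (c * r) / c - a * Complex.exp (c * r) / (T * c ^ 2))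
      - ((1 + (a:ℂ) * l / T) * Complex.exp (c * l) / c - a * Complex.exp (c * l) / (T * c ^ 2)) := by
  apply intervalIntegral.integral_eq_sub_of_hasDerivAt
  · intro x hx
    exact aux_deriv T hT.ne' c hc a x
  · apply Continuous.intervalIntegrable
    fun_prop

lemma tri_integral {T : ℝ} (hT : 0 < T) (v : ℝ) :
    (∫ ξ in (-T)..T, Complex.exp (↑(-2*π*ξ*v) * Complex.I) * ((max (1 - |ξ|/T) 0 : ℝ) : ℂ))
      = (fejer T v : ℂ) := by
  have hcont : Continuous fun ξ : ℝ =>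
      Complex.exp (↑(-2*π*ξ*v) * Complex.I) * ((max (1 - |ξ|/T) 0 : ℝ) : ℂ) := by
    fun_prop
  have hsplit := intervalIntegral.integral_add_adjacent_intervals
    (μ := volume) (a := -T) (b := 0) (c := T)
    (hcont.intervalIntegrable _ _) (hcont.intervalIntegrable _ _)
  rw [← hsplit]
  have hL : ∀ ξ ∈ Set.uIcc (-T) (0:ℝ),
      Complex.exp (↑(-2*π*ξ*v) * Complex.I) * ((max (1 - |ξ|/T) 0 : ℝ) : ℂ)
        = ((1 + (1:ℝ) * ξ / T : ℝ) : ℂ) * Complex.exp ((↑(-2*π*v) * Complex.I) * ξ) := by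
    intro ξ hξ
    rw [Set.uIcc_of_le (by linarith : -T ≤ (0:ℝ)), Set.mem_Icc] at hξ
    have habs : |ξ| = -ξ := abs_of_nonpos hξ.2
    have hmax : max (1 - |ξ|/T) 0 = 1 + 1 * ξ / T := by
      rw [habs, max_eq_left (by rw [le_sub_iff_add_le, zero_add, div_le_one hT]; linarith)]
      ring
    rw [hmax, mul_comm]
    congr 2
    push_cast; ring
  have hR : ∀ ξ ∈ Set.uIcc (0:ℝ) T,
      Complex.exp (↑(-2*π*ξ*v) * Complex.I) * ((max (1 - |ξ|/T) 0 : ℝ) : ℂ)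
        = ((1 + (-1:ℝ) * ξ / T : ℝ) : ℂ) * Complex.exp ((↑(-2*π*v) * Complex.I) * ξ) := by
    intro ξ hξ
    rw [Set.uIcc_of_le hT.le, Set.mem_Icc] at hξ
    have habs : |ξ| = ξ := abs_of_nonneg hξ.1
    have hmax : max (1 - |ξ|/T) 0 = 1 + (-1) * ξ / T := by
      rw [habs, max_eq_left (by rw [le_sub_iff_add_le, zero_add, div_le_one hT]; linarith)]
      ring
    rw [hmax, mul_comm]
    congr 2
    push_cast; ring
  rw [intervalIntegral.integral_congr hL, intervalIntegral.integral_congr hR]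
  by_cases hv : v = 0
  · subst hv
    simp only [Complex.ofReal_zero, zero_mul, mul_zero, neg_zero, Complex.exp_zero, mul_one]
    rw [intervalIntegral.integral_ofReal, intervalIntegral.integral_ofReal]
    have e1 : (∫ ξ in (-T)..(0:ℝ), (1 + 1 * ξ / T)) = T - T/2 := by
      simp only [one_mul]
      rw [intervalIntegral.integral_add intervalIntegrable_const
        ((intervalIntegral.intervalIntegrable_id).div_const T)]
      rw [intervalIntegral.integral_div, integral_id]
      simp
      field_simp
      ring
    have e2 : (∫ ξ in (0:ℝ)..T, (1 + (-1) * ξ / T)) = T - T/2 := by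
      rw [intervalIntegral.integral_add intervalIntegrable_const
        (((intervalIntegral.intervalIntegrable_id).const_mul (-1)).div_const T)]
      rw [intervalIntegral.integral_div, intervalIntegral.integral_const_mul, integral_id]
      simp
      field_simp
      ring
    rw [e1, e2]
    have : fejer T 0 = T := by simp [fejer]
    rw [this]
    push_cast
    ring
  · set c : ℂ := ↑(-2*π*v) * Complex.I with hc_def
    have hr : (-2*π*v) ≠ 0 :=
      mul_ne_zero (mul_ne_zero (by norm_num) Real.pi_ne_zero) hv
    have hc : c ≠ 0 :=
      mul_ne_zero (Complex.ofReal_ne_zero.mpr hr) Complex.I_ne_zero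
    rw [int_piece T hT c hc 1 (-T) 0, int_piece T hT c hc (-1) 0 T]
    have hT' : (T:ℂ) ≠ 0 := by exact_mod_cast hT.ne'
    have hct : c * (T:ℂ) = ↑(-2*π*v*T) * Complex.I := by rw [hc_def]; push_cast; ring
    have hcmt : c * (-T:ℂ) = ↑(2*π*v*T) * Complex.I := by rw [hc_def]; push_cast; ring
    have hc2 : (T:ℂ) * c ^ 2 = ((-(4*π^2*v^2*T) : ℝ) : ℂ) := by
      rw [hc_def, mul_pow, Complex.I_sq]; push_cast; ring
    trans ((Complex.exp (c * T) + Complex.exp (c * (-T)) - 2) / ((T:ℂ) * c ^ 2))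
    · clear_value c
      have hTc : (T:ℂ) * c ^ 2 ≠ 0 := mul_ne_zero hT' (pow_ne_zero 2 hc)
      push_cast
      simp only [mul_zero, Complex.exp_zero]
      rw [eq_div_iff hTc]
      field_simp
      ring
    · rw [hct, hcmt, hc2, Complex.exp_mul_I, Complex.exp_mul_I]
      rw [← Complex.ofReal_cos, ← Complex.ofReal_sin, ← Complex.ofReal_cos, ← Complex.ofReal_sin]
      have hcos : Real.cos (-2*π*v*T) = Real.cos (2*π*v*T) := by
        rw [show -2*π*v*T = -(2*π*v*T) by ring, Real.cos_neg]
      have hsin : Real.sin (-2*π*v*T) = -Real.sin (2*π*v*T) := by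
        rw [show -2*π*v*T = -(2*π*v*T) by ring, Real.sin_neg]
      rw [hcos, hsin]
      have hreal : (2*Real.cos (2*π*v*T) - 2) / (-(4*π^2*v^2*T)) = fejer T v := by
        unfold fejer
        rw [if_neg hv]
        have hθ : π * T * v ≠ 0 := mul_ne_zero (mul_ne_zero Real.pi_ne_zero hT.ne') hv
        have h2θ : (2:ℝ)*π*v*T = 2*(π*T*v) := by ring
        rw [h2θ, Real.cos_two_mul]
        have hpyth := Real.sin_sq_add_cos_sq (π*T*v)
        field_simp
        nlinarith [sq_nonneg (Real.sin (π*T*v)), sq_nonneg (Real.cos (π*T*v)), Real.pi_pos,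
          sq_nonneg (π*T*v)]
      rw [← hreal]
      push_cast
      ring

open FourierTransform in
lemma tri_fourier {T : ℝ} (hT : 0 < T) :
    𝓕 (fun ξ : ℝ => ((max (1 - |ξ|/T) 0 : ℝ) : ℂ)) = fun v => (fejer T v : ℂ) := by
  funext v
  rw [Real.fourier_real_eq_integral_exp_smul]
  have h0 : ∀ ξ : ℝ, ξ ∉ Set.Icc (-T) T →
      Complex.exp (↑(-2 * π * ξ * v) * Complex.I) • ((max (1 - |ξ|/T) 0 : ℝ) : ℂ) = 0 := by
    intro ξ hξ
    rw [Set.mem_Icc] at hξ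
    push_neg at hξ
    have hTabs : T ≤ |ξ| := by
      rcases le_or_gt (-T) ξ with h | h
      · have := hξ h
        calc T ≤ ξ := this.le
          _ ≤ |ξ| := le_abs_self ξ
      · calc T ≤ -ξ := by linarith
          _ ≤ |ξ| := neg_le_abs ξ
    have : max (1 - |ξ|/T) 0 = 0 := by
      apply max_eq_right
      rw [sub_nonpos, le_div_iff₀ hT]
      linarith
    rw [this]
    simp
  rw [← MeasureTheory.setIntegral_eq_integral_of_forall_compl_eq_zero h0,
    MeasureTheory.integral_Icc_eq_integral_Ioc,
    ← intervalIntegral.integral_of_le (by linarith : -T ≤ T)]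
  simp only [smul_eq_mul]
  exact tri_integral hT v

open FourierTransform in
theorem stmt1 (T : ℝ) (hT : 0 < T) (Q : ℝ) :
    (∫ v : ℝ, (fejer T v : ℂ) * Complex.exp (2 * π * Complex.I * ((Q * v : ℝ) : ℂ)))
      = (max (1 - |Q| / T) 0 : ℝ) := by
  set tri : ℝ → ℂ := fun ξ : ℝ => ((max (1 - |ξ|/T) 0 : ℝ) : ℂ) with htri
  have hcont : Continuous tri := by
    rw [htri]; fun_prop
  have hint : Integrable tri := by
    apply hcont.integrable_of_hasCompactSupport
    apply HasCompactSupport.intro (isCompact_Icc (a := -T) (b := T))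
    intro ξ hξ
    rw [Set.mem_Icc] at hξ
    push_neg at hξ
    have hTabs : T ≤ |ξ| := by
      rcases le_or_gt (-T) ξ with h | h
      · have := hξ h
        calc T ≤ ξ := this.le
          _ ≤ |ξ| := le_abs_self ξ
      · calc T ≤ -ξ := by linarith
          _ ≤ |ξ| := neg_le_abs ξ
    have hmax : max (1 - |ξ|/T) 0 = 0 := by
      apply max_eq_right
      rw [sub_nonpos, le_div_iff₀ hT]
      linarith
    simp [htri, hmax]
  have hfint : Integrable (𝓕 tri) := by
    rw [htri, tri_fourier hT]
    exact (fejer_integrable hT).ofReal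
  have hinv := hcont.fourierInv_fourier_eq hint hfint
  rw [htri, tri_fourier hT] at hinv
  have key : (∫ v : ℝ, (fejer T v : ℂ) * Complex.exp (2 * π * Complex.I * ((Q * v : ℝ) : ℂ)))
      = 𝓕⁻ (fun v => (fejer T v : ℂ)) Q := by
    rw [Real.fourierInv_eq_fourier_neg,
      Real.fourier_real_eq_integral_exp_smul]
    congr 1
    funext v
    rw [smul_eq_mul, mul_comm]
    congr 1
    push_cast
    ring
  rw [key, hinv]
end

section
/- For ℓ a positive integer and n a positive integer, define θ_ℓ(n) = ∑ h^{1/2}/(2k-h)^{1/2} · (1 - h/(2k-h))^{ℓ-1}, the sum being over pairs of positive integers (h,k) with k > h and h(2k-h) = n. Then θ_ℓ(n) is bounded below by a positive constant (depending only on ℓ) times the number of factorizations n = hm with positive integers h, m satisfying 3h < m ≤ 4h and h ≡ m (mod 2). -/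
open Real

/-- `θ_ℓ(n) = ∑_{k>h, h(2k-h)=n} h^{1/2}/(2k-h)^{1/2} · (1 - h/(2k-h))^{ℓ-1}`,
the sum running over pairs of positive integers `(h,k)` with `k > h`. -/
noncomputable def theta (ℓ n : ℕ) : ℝ :=
  ∑ p ∈ (Finset.Icc 1 n ×ˢ Finset.Icc 1 n).filter
      (fun p : ℕ × ℕ => p.1 < p.2 ∧ p.1 * (2 * p.2 - p.1) = n),
    (p.1 : ℝ) ^ (1 / 2 : ℝ) / ((2 * p.2 - p.1 : ℕ) : ℝ) ^ (1 / 2 : ℝ)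
      * (1 - (p.1 : ℝ) / ((2 * p.2 - p.1 : ℕ) : ℝ)) ^ (ℓ - 1)

/-- The number of factorizations `n = h·m` with `3h < m ≤ 4h` and `h ≡ m (mod 2)`. -/
def goodFactorizations (n : ℕ) : ℕ :=
  ((Nat.divisorsAntidiagonal n).filter
    (fun p : ℕ × ℕ => 3 * p.1 < p.2 ∧ p.2 ≤ 4 * p.1 ∧ p.1 % 2 = p.2 % 2)).card

lemma aux_term (ℓ : ℕ) (h m : ℕ) (hh : 1 ≤ h) (h3 : 3 * h < m) (h4 : m ≤ 4 * h) :
    (1/2 : ℝ) * (2/3) ^ (ℓ - 1)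
      ≤ (h : ℝ) ^ (1/2 : ℝ) / (m : ℝ) ^ (1/2 : ℝ) * (1 - (h : ℝ) / (m : ℝ)) ^ (ℓ - 1) := by
  have hhpos : (0:ℝ) < h := by exact_mod_cast hh
  have hmpos : (0:ℝ) < m := by
    have : 0 < m := by omega
    exact_mod_cast this
  have hsq : (0:ℝ) < (h:ℝ) ^ (1/2 : ℝ) := Real.rpow_pos_of_pos hhpos _
  have h1 : (1/2 : ℝ) ≤ (h : ℝ) ^ (1/2 : ℝ) / (m : ℝ) ^ (1/2 : ℝ) := by
    have hm4 : (m:ℝ) ≤ 4 * h := by exact_mod_cast h4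
    have : (m:ℝ) ^ (1/2 : ℝ) ≤ (4 * h : ℝ) ^ (1/2 : ℝ) :=
      Real.rpow_le_rpow hmpos.le hm4 (by norm_num)
    have h42 : ((4:ℝ) * h) ^ (1/2 : ℝ) = 2 * (h:ℝ) ^ (1/2 : ℝ) := by
      rw [Real.mul_rpow (by norm_num) hhpos.le]
      congr 1
      rw [show (4:ℝ) = 2 ^ (2:ℕ) by norm_num, ← Real.rpow_natCast 2 2,
        ← Real.rpow_mul (by norm_num)]
      norm_num
    rw [h42] at this
    rw [le_div_iff₀ (Real.rpow_pos_of_pos hmpos _)]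
    nlinarith
  have h2 : (2/3 : ℝ) ≤ 1 - (h : ℝ) / (m : ℝ) := by
    have : (h:ℝ) / m ≤ 1/3 := by
      rw [div_le_div_iff₀ hmpos (by norm_num)]
      have : (3:ℝ) * h ≤ m := by exact_mod_cast h3.le
      linarith
    linarith
  calc (1/2 : ℝ) * (2/3) ^ (ℓ - 1)
      ≤ ((h : ℝ) ^ (1/2 : ℝ) / (m : ℝ) ^ (1/2 : ℝ)) * (1 - (h : ℝ) / (m : ℝ)) ^ (ℓ - 1) := by
        apply mul_le_mul h1 (pow_le_pow_left₀ (by norm_num) h2 _) (by positivity)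
        positivity

theorem stmt5 (ℓ : ℕ) (hℓ : 1 ≤ ℓ) :
    ∃ c > (0 : ℝ), ∀ n : ℕ, 1 ≤ n →
      c * (goodFactorizations n : ℝ) ≤ theta ℓ n := by
  classical
  refine ⟨(1/2 : ℝ) * (2/3) ^ (ℓ - 1), by positivity, fun n hn => ?_⟩
  set c : ℝ := (1/2 : ℝ) * (2/3) ^ (ℓ - 1) with hc
  set f : ℕ × ℕ → ℝ := fun p =>
    (p.1 : ℝ) ^ (1 / 2 : ℝ) / ((2 * p.2 - p.1 : ℕ) : ℝ) ^ (1 / 2 : ℝ)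
      * (1 - (p.1 : ℝ) / ((2 * p.2 - p.1 : ℕ) : ℝ)) ^ (ℓ - 1) with hfdef
  set S := (Finset.Icc 1 n ×ˢ Finset.Icc 1 n).filter
      (fun p : ℕ × ℕ => p.1 < p.2 ∧ p.1 * (2 * p.2 - p.1) = n) with hS
  set T := ((Nat.divisorsAntidiagonal n).filter
    (fun p : ℕ × ℕ => 3 * p.1 < p.2 ∧ p.2 ≤ 4 * p.1 ∧ p.1 % 2 = p.2 % 2)) with hT
  set φ : ℕ × ℕ → ℕ × ℕ := fun p => (p.1, (p.1 + p.2) / 2) with hφ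
  -- unpack T membership
  have hTmem : ∀ p ∈ T, p.1 * p.2 = n ∧ 1 ≤ p.1 ∧ 3 * p.1 < p.2 ∧ p.2 ≤ 4 * p.1 ∧
      2 * ((p.1 + p.2) / 2) = p.1 + p.2 := by
    intro p hp
    rw [hT, Finset.mem_filter, Nat.mem_divisorsAntidiagonal] at hp
    obtain ⟨⟨hmul, hn0⟩, h3, h4, hpar⟩ := hp
    have hp1 : 1 ≤ p.1 := by
      rcases Nat.eq_zero_or_pos p.1 with h | h
      · simp [h] at hmul; omega
      · exact h
    refine ⟨hmul, hp1, h3, h4, ?_⟩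
    omega
  -- image is in S, and key value identity
  have hkey : ∀ p ∈ T, (2 * ((p.1 + p.2) / 2) - p.1) = p.2 := by
    intro p hp
    obtain ⟨_, _, _, _, he⟩ := hTmem p hp
    omega
  have hsub : T.image φ ⊆ S := by
    intro q hq
    rw [Finset.mem_image] at hq
    obtain ⟨p, hp, rfl⟩ := hq
    obtain ⟨hmul, hp1, h3, h4, he⟩ := hTmem p hp
    rw [hS, Finset.mem_filter, Finset.mem_product, Finset.mem_Icc, Finset.mem_Icc]
    have hp2n : p.2 ≤ n := by nlinarith [hmul]
    have hp1n : p.1 ≤ n := by nlinarith [hmul]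
    refine ⟨⟨⟨hp1, hp1n⟩, ?_, ?_⟩, ?_, ?_⟩
    · show 1 ≤ (p.1 + p.2) / 2; omega
    · show (p.1 + p.2) / 2 ≤ n; omega
    · show p.1 < (p.1 + p.2) / 2; omega
    · show p.1 * (2 * ((p.1 + p.2) / 2) - p.1) = n
      rw [hkey p hp]; exact hmul
  have hinj : Set.InjOn φ T := by
    intro p hp q hq hpq
    obtain ⟨hp1, hp2, _⟩ := hTmem p hp
    obtain ⟨hq1, hq2, _⟩ := hTmem q hq
    simp only [hφ, Prod.mk.injEq] at hpq
    obtain ⟨e1, e2⟩ := hpq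
    have := (hTmem p hp).2.2.2.2
    have := (hTmem q hq).2.2.2.2
    have e3 : p.2 = q.2 := by omega
    exact Prod.ext e1 e3
  -- nonnegativity on S
  have hnonneg : ∀ p ∈ S, 0 ≤ f p := by
    intro p hp
    rw [hS, Finset.mem_filter] at hp
    obtain ⟨_, hlt, hmul⟩ := hp
    have hd : p.1 ≤ 2 * p.2 - p.1 := by omega
    have hdr : (p.1 : ℝ) / ((2 * p.2 - p.1 : ℕ) : ℝ) ≤ 1 := by
      rcases Nat.eq_zero_or_pos (2 * p.2 - p.1) with h0 | h0
      · simp [h0]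
      · rw [div_le_one (by exact_mod_cast h0)]
        exact_mod_cast hd
    have : (0:ℝ) ≤ 1 - (p.1 : ℝ) / ((2 * p.2 - p.1 : ℕ) : ℝ) := by linarith
    simp only [hfdef]
    positivity
  -- term bound on image
  have hterm : ∀ q ∈ T.image φ, c ≤ f q := by
    intro q hq
    rw [Finset.mem_image] at hq
    obtain ⟨p, hp, rfl⟩ := hq
    obtain ⟨hmul, hp1, h3, h4, he⟩ := hTmem p hp
    have hk := hkey p hp
    simp only [hfdef, hφ, hk]
    exact aux_term ℓ p.1 p.2 hp1 h3 h4
  have step1 : ∑ q ∈ T.image φ, f q ≤ theta ℓ n := by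
    exact Finset.sum_le_sum_of_subset_of_nonneg hsub (fun i hi _ => hnonneg i hi)
  have step2 : (T.card : ℝ) * c ≤ ∑ q ∈ T.image φ, f q := by
    have : ∑ q ∈ T.image φ, c ≤ ∑ q ∈ T.image φ, f q := Finset.sum_le_sum hterm
    rw [Finset.sum_const, Finset.card_image_of_injOn hinj] at this
    simpa [nsmul_eq_mul] using this
  have : c * (goodFactorizations n : ℝ) = (T.card : ℝ) * c := by
    rw [goodFactorizations, ← hT, mul_comm]
  rw [this]
  linarith
end

section
/- For ρ(ξ) = πξ(1−ξ)cot(πξ) + ξ on (0,1), one has 0 < ρ(ξ) ≤ 1 for all ξ ∈ (0,1); consequently the Vaaler coefficients α_{h,H} = ρ(h/(H+1))/(πh) satisfy 0 < α_{h,H} ≤ 1/(πh), and for h ≤ H/2 one has α_{h,H} ≥ c/h for an absolute constant c > 0. -/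
open Real

/-- Vaaler's function `ρ(ξ) = πξ(1-ξ)cot(πξ) + ξ`. -/
noncomputable def vaalerRho (ξ : ℝ) : ℝ :=
  π * ξ * (1 - ξ) * (Real.cos (π * ξ) / Real.sin (π * ξ)) + ξ

lemma aux_mul_cos_lt_sin {x : ℝ} (h1 : 0 < x) (h2 : x < π / 2) :
    x * Real.cos x < Real.sin x := by
  have hc : 0 < Real.cos x := Real.cos_pos_of_mem_Ioo ⟨by linarith, h2⟩
  have ht := Real.lt_tan h1 h2
  rw [Real.tan_eq_sin_div_cos] at ht
  calc x * Real.cos x < (Real.sin x / Real.cos x) * Real.cos x :=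
        mul_lt_mul_of_pos_right ht hc
    _ = Real.sin x := by field_simp

lemma aux_pos {ξ : ℝ} (h0 : 0 < ξ) (h1 : ξ < 1) : 0 < vaalerRho ξ := by
  have hs : 0 < Real.sin (π * ξ) :=
    Real.sin_pos_of_pos_of_lt_pi (by positivity) (by nlinarith [Real.pi_pos])
  unfold vaalerRho
  rcases le_or_gt ξ (1/2) with hle | hgt
  · have hc : 0 ≤ Real.cos (π * ξ) := by
      apply Real.cos_nonneg_of_mem_Icc
      constructor <;> nlinarith [Real.pi_pos]
    have : 0 ≤ π * ξ * (1 - ξ) * (Real.cos (π * ξ) / Real.sin (π * ξ)) := by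
      have h3 : 0 ≤ Real.cos (π * ξ) / Real.sin (π * ξ) := div_nonneg hc hs.le
      have h2 : 0 ≤ π * ξ * (1 - ξ) :=
        mul_nonneg (mul_pos Real.pi_pos h0).le (by linarith)
      exact mul_nonneg h2 h3
    linarith
  · set x := π * (1 - ξ) with hx
    have hx0 : 0 < x := by nlinarith [Real.pi_pos]
    have hx2 : x < π / 2 := by nlinarith [Real.pi_pos]
    have hcos : Real.cos (π * ξ) = -Real.cos x := by
      rw [hx, show π * ξ = π - π * (1 - ξ) by ring, Real.cos_pi_sub]
    have hsin : Real.sin (π * ξ) = Real.sin x := by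
      rw [hx, show π * ξ = π - π * (1 - ξ) by ring, Real.sin_pi_sub]
    have key := aux_mul_cos_lt_sin hx0 hx2
    have hsx : 0 < Real.sin x := by rw [← hsin]; exact hs
    rw [hcos, hsin]
    have hfrac : x * Real.cos x / Real.sin x < 1 := by
      rw [div_lt_one hsx]; linarith
    have heq : π * ξ * (1 - ξ) * (-Real.cos x / Real.sin x)
        = -ξ * (x * Real.cos x / Real.sin x) := by
      rw [hx]; ring
    rw [heq]
    nlinarith [mul_lt_mul_of_pos_left hfrac h0]

lemma aux_le_one {ξ : ℝ} (h0 : 0 < ξ) (h1 : ξ < 1) : vaalerRho ξ ≤ 1 := by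
  have hs : 0 < Real.sin (π * ξ) :=
    Real.sin_pos_of_pos_of_lt_pi (by positivity) (by nlinarith [Real.pi_pos])
  unfold vaalerRho
  rcases lt_or_ge ξ (1/2) with hlt | hge
  · set x := π * ξ with hx
    have hx0 : 0 < x := by positivity
    have hx2 : x < π / 2 := by nlinarith [Real.pi_pos]
    have key := aux_mul_cos_lt_sin hx0 hx2
    have hfrac : x * Real.cos x / Real.sin x < 1 := by
      rw [div_lt_one hs]; linarith
    have heq : π * ξ * (1 - ξ) * (Real.cos x / Real.sin x)
        = (1 - ξ) * (x * Real.cos x / Real.sin x) := by ring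
    rw [heq]
    nlinarith [mul_lt_mul_of_pos_left hfrac (show (0:ℝ) < 1 - ξ by linarith)]
  · have hc : Real.cos (π * ξ) ≤ 0 := by
      apply Real.cos_nonpos_of_pi_div_two_le_of_le
      · nlinarith [Real.pi_pos]
      · nlinarith [Real.pi_pos]
    have : π * ξ * (1 - ξ) * (Real.cos (π * ξ) / Real.sin (π * ξ)) ≤ 0 := by
      apply mul_nonpos_of_nonneg_of_nonpos
      · exact mul_nonneg (mul_pos Real.pi_pos h0).le (by linarith)
      · exact div_nonpos_of_nonpos_of_nonneg hc hs.le
    linarith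

lemma aux_lower {ξ : ℝ} (h0 : 0 < ξ) (h1 : ξ ≤ 1/2) : 1/2 ≤ vaalerRho ξ := by
  have hpx : 0 < π * ξ := by positivity
  have hs : 0 < Real.sin (π * ξ) :=
    Real.sin_pos_of_pos_of_lt_pi hpx (by nlinarith [Real.pi_pos])
  have hsle : Real.sin (π * ξ) ≤ π * ξ := Real.sin_le hpx.le
  have hc : 1 - 2 * ξ ≤ Real.cos (π * ξ) := by
    have h := Real.one_sub_mul_le_cos (x := π * ξ) hpx.le (by nlinarith [Real.pi_pos])
    have hpi : 2 / π * (π * ξ) = 2 * ξ := by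
      field_simp
    rw [hpi] at h
    linarith
  have hnn : 0 ≤ 1 - 2 * ξ := by linarith
  have hcnn : 0 ≤ Real.cos (π * ξ) := le_trans hnn hc
  have hfrac : (1 - 2*ξ) / (π * ξ) ≤ Real.cos (π * ξ) / Real.sin (π * ξ) :=
    div_le_div₀ hcnn hc hs hsle
  unfold vaalerRho
  have key : (1 - ξ) * (1 - 2*ξ) ≤
      π * ξ * (1 - ξ) * (Real.cos (π * ξ) / Real.sin (π * ξ)) := by
    have h2 : π * ξ * (1 - ξ) * ((1 - 2*ξ) / (π * ξ)) = (1 - ξ) * (1 - 2*ξ) := by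
      field_simp
    calc (1 - ξ) * (1 - 2*ξ) = π * ξ * (1 - ξ) * ((1 - 2*ξ) / (π * ξ)) := h2.symm
      _ ≤ _ := by
        apply mul_le_mul_of_nonneg_left hfrac
        nlinarith [Real.pi_pos]
  nlinarith

theorem stmt16 :
    (∀ ξ ∈ Set.Ioo (0 : ℝ) 1, 0 < vaalerRho ξ ∧ vaalerRho ξ ≤ 1) ∧
    ∃ c > (0 : ℝ), ∀ H : ℕ, 1 ≤ H → ∀ h : ℕ, 1 ≤ h → h ≤ H →
      0 < vaalerRho ((h : ℝ) / ((H : ℝ) + 1)) / (π * (h : ℝ)) ∧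
      vaalerRho ((h : ℝ) / ((H : ℝ) + 1)) / (π * (h : ℝ)) ≤ 1 / (π * (h : ℝ)) ∧
      (2 * h ≤ H →
        c / (h : ℝ) ≤ vaalerRho ((h : ℝ) / ((H : ℝ) + 1)) / (π * (h : ℝ))) := by
  constructor
  · rintro ξ ⟨h0, h1⟩
    exact ⟨aux_pos h0 h1, aux_le_one h0 h1⟩
  · refine ⟨1/16, by norm_num, fun H hH h hh hhH => ?_⟩
    have hhR : (1:ℝ) ≤ (h:ℝ) := by exact_mod_cast hh
    have hHR : (h:ℝ) ≤ (H:ℝ) := by exact_mod_cast hhH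
    have hden : (0:ℝ) < (H:ℝ) + 1 := by positivity
    set ξ : ℝ := (h : ℝ) / ((H : ℝ) + 1) with hξ
    have hξ0 : 0 < ξ := div_pos (by linarith) hden
    have hξ1 : ξ < 1 := by rw [hξ, div_lt_one hden]; linarith
    have hπh : 0 < π * (h:ℝ) := by positivity
    refine ⟨div_pos (aux_pos hξ0 hξ1) hπh,
      div_le_div_of_nonneg_right (aux_le_one hξ0 hξ1) hπh.le, ?_⟩
    intro h2h
    have h2hR : 2 * (h:ℝ) ≤ (H:ℝ) := by exact_mod_cast h2h
    have hξhalf : ξ ≤ 1/2 := by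
      rw [hξ, div_le_iff₀ hden]; linarith
    have hlow := aux_lower hξ0 hξhalf
    rw [div_le_div_iff₀ (by linarith) hπh]
    have hπ4 : π ≤ 4 := by linarith [Real.pi_le_four]
    nlinarith [Real.pi_pos]
end
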